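/- Let B be a nonnegative real-valued random variable and let v ≥ 0. Define g(b) = (v − b)·P(B ≤ b) for b ≥ 0. Then the set of maximizers {b ∈ [0, ∞) : g(b) = sup_{b' ≥ 0} g(b')} is nonempty and possesses a least element, and this least element belongs to [0, v]. -/

import Mathlib

open MeasureTheory Filter Topology

/-- For a nonnegative real random variable `B` (modelled by `X`) and `v ≥ 0`,
the set of maximizers over `[0, ∞)` of `g(b) = (v - b) * P(B ≤ b)` is nonempty, has a
least element, and this least element belongs to `[0, v]`. -/
theorem first_price_smallest_optimal_bid_exists
    {Ω : Type*} [MeasurableSpace Ω] (P : Measure Ω) [IsProbabilityMeasure P]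
    (X : Ω → ℝ) (hX : Measurable X) (hX0 : ∀ ω, 0 ≤ X ω)
    (v : ℝ) (hv : 0 ≤ v)
    (g : ℝ → ℝ) (hg : ∀ b, g b = (v - b) * (P {ω | X ω ≤ b}).toReal) :
    ∃ m ∈ Set.Icc (0 : ℝ) v,
      IsLeast {b : ℝ | 0 ≤ b ∧ g b = sSup (g '' Set.Ici (0 : ℝ))} m := by
  classical
  set μ : Measure ℝ := P.map X with hμdef
  haveI hμ : IsProbabilityMeasure μ := Measure.isProbabilityMeasure_map hX.aemeasurable
  set f : ℝ → ℝ := fun b => ProbabilityTheory.cdf μ b with hfdef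
  have hf_eq : ∀ b, (P {ω | X ω ≤ b}).toReal = f b := by
    intro b
    have : μ (Set.Iic b) = P {ω | X ω ≤ b} := by
      rw [hμdef, Measure.map_apply hX measurableSet_Iic]
      rfl
    rw [hfdef]
    simp only [ProbabilityTheory.cdf_eq_real, measureReal_def, this]
  have hg' : ∀ b, g b = (v - b) * f b := fun b => by rw [hg, hf_eq]
  have hf_mono : Monotone f := (ProbabilityTheory.cdf μ).mono
  have hf_nonneg : ∀ b, 0 ≤ f b := fun b => ProbabilityTheory.cdf_nonneg μ b
  have hf_le_one : ∀ b, f b ≤ 1 := fun b => ProbabilityTheory.cdf_le_one μ b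
  have hf_rc : ∀ b, ContinuousWithinAt f (Set.Ici b) b :=
    (ProbabilityTheory.cdf μ).right_continuous
  -- upper semicontinuity of g at points of [0, v]
  have usc : ∀ b ∈ Set.Icc (0:ℝ) v, ∀ y, g b < y → ∀ᶠ t in 𝓝 b, g t < y := by
    intro b hb y hy
    have hcont : ContinuousWithinAt (fun t => (v - t) * f t) (Set.Ici b) b :=
      (continuousWithinAt_const.sub continuousWithinAt_id).mul (hf_rc b)
    have hgb : (v - b) * f b < y := by rw [← hg']; exact hy
    have hright : ∀ᶠ t in 𝓝[≥] b, g t < y := by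
      filter_upwards [hcont.eventually_lt_const hgb] with t ht
      rw [hg']; exact ht
    have hleft : ∀ᶠ t in 𝓝[≤] b, g t < y := by
      have hcont2 : Tendsto (fun t => (v - t) * f b) (𝓝[≤] b) (𝓝 ((v - b) * f b)) := by
        apply Tendsto.mono_left _ nhdsWithin_le_nhds
        exact (continuous_const.sub continuous_id).mul continuous_const |>.tendsto b
      have hev : ∀ᶠ t in 𝓝[≤] b, (v - t) * f b < y := hcont2.eventually_lt_const hgb
      filter_upwards [hev, self_mem_nhdsWithin] with t ht (ht2 : t ≤ b)
      have htv : 0 ≤ v - t := by linarith [hb.2]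
      calc g t = (v - t) * f t := hg' t
        _ ≤ (v - t) * f b := mul_le_mul_of_nonneg_left (hf_mono ht2) htv
        _ < y := ht
    rw [← nhdsLE_sup_nhdsGE b]
    exact ⟨hleft, hright⟩
  set S : ℝ := sSup (g '' Set.Ici (0:ℝ)) with hSdef
  have hbdd : BddAbove (g '' Set.Ici (0:ℝ)) := by
    refine ⟨v, ?_⟩
    rintro x ⟨b, hb, rfl⟩
    rw [hg']
    rcases le_or_gt b v with h | h
    · calc (v - b) * f b ≤ (v - b) * 1 :=
            mul_le_mul_of_nonneg_left (hf_le_one b) (by linarith)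
        _ ≤ v := by have hb0 : (0:ℝ) ≤ b := hb; linarith
    · have : (v - b) * f b ≤ 0 := mul_nonpos_of_nonpos_of_nonneg (by linarith) (hf_nonneg b)
      linarith
  have hgv : g v = 0 := by rw [hg']; ring
  have hub : ∀ b, 0 ≤ b → g b ≤ S :=
    fun b hb => le_csSup hbdd ⟨b, hb, rfl⟩
  have hS0 : 0 ≤ S := hgv ▸ hub v hv
  -- maximizers within [0, v]
  set K : Set ℝ := {b | b ∈ Set.Icc (0:ℝ) v ∧ S ≤ g b} with hKdef
  -- K is closed
  have hKclosed : IsClosed K := by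
    refine IsSeqClosed.isClosed ?_
    intro u b hu htend
    have hbI : b ∈ Set.Icc (0:ℝ) v :=
      isClosed_Icc.mem_of_tendsto htend (Eventually.of_forall fun n => (hu n).1)
    refine ⟨hbI, ?_⟩
    by_contra hlt
    push_neg at hlt
    obtain ⟨n, hn⟩ := (htend.eventually (usc b hbI S hlt)).exists
    exact absurd (hu n).2 (not_le.mpr hn)
  -- K is nonempty (attainment of the sup)
  have hKne : K.Nonempty := by
    have hex : ∀ n : ℕ, ∃ b ∈ Set.Icc (0:ℝ) v, S - 1/(n+1) < g b := by
      intro n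
      have hpos : (0:ℝ) < 1/(n+1) := by positivity
      obtain ⟨x, ⟨b, hb, rfl⟩, hx⟩ := exists_lt_of_lt_csSup
        ⟨g 0, Set.mem_image_of_mem g Set.self_mem_Ici⟩ (show S - 1/(n+1) < S by linarith)
      rcases le_or_gt b v with h | h
      · exact ⟨b, ⟨hb, h⟩, hx⟩
      · refine ⟨v, ⟨hv, le_refl v⟩, ?_⟩
        have : g b ≤ 0 := by
          rw [hg']
          exact mul_nonpos_of_nonpos_of_nonneg (by linarith) (hf_nonneg b)
        rw [hgv]; linarith
    choose u hu1 hu2 using hex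
    obtain ⟨b, hbI, φ, hφ, htend⟩ := isCompact_Icc.tendsto_subseq hu1
    refine ⟨b, hbI, ?_⟩
    by_contra hlt
    push_neg at hlt
    set y := (g b + S) / 2 with hy
    have hy1 : g b < y := by rw [hy]; linarith
    have hy2 : y < S := by rw [hy]; linarith
    have hev1 : ∀ᶠ n in atTop, g (u (φ n)) < y := htend.eventually (usc b hbI y hy1)
    have hev2 : ∀ᶠ n : ℕ in atTop, y < S - 1/(n+1 : ℝ) := by
      have : Tendsto (fun n : ℕ => S - 1/(n+1 : ℝ)) atTop (𝓝 (S - 0)) :=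
        tendsto_const_nhds.sub tendsto_one_div_add_atTop_nhds_zero_nat
      rw [sub_zero] at this
      exact this.eventually_const_lt hy2
    obtain ⟨n, h1, h2⟩ := (hev1.and hev2).exists
    have h3 : S - 1/(φ n + 1 : ℝ) ≤ g (u (φ n)) := (hu2 (φ n)).le
    have h4 : 1/(φ n + 1 : ℝ) ≤ 1/(n + 1 : ℝ) := by
      apply one_div_le_one_div_of_le (by positivity)
      have : (n:ℝ) ≤ (φ n : ℝ) := Nat.cast_le.mpr hφ.le_apply
      linarith
    linarith
  have hKbdd : BddBelow K := ⟨0, fun b hb => hb.1.1⟩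
  set m : ℝ := sInf K with hm
  have hmK : m ∈ K := hKclosed.csInf_mem hKne hKbdd
  have hmS : g m = S := le_antisymm (hub m hmK.1.1) hmK.2
  refine ⟨m, hmK.1, ⟨⟨hmK.1.1, hmS⟩, ?_⟩⟩
  intro b hb
  rcases le_or_gt b v with h | h
  · exact csInf_le hKbdd ⟨⟨hb.1, h⟩, hb.2.ge⟩
  · exact le_trans hmK.1.2 h.le
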